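/- Under H₀ with z_i = √τ_i c_i, the GLRT statistic L_G(z₁, z₂) has a distribution that does not depend on the textures τ₁, τ₂ > 0; formally, L_G(√τ₁ c₁, √τ₂ c₂) = L_G(c₁, c₂) for all positive τ₁, τ₂ and all vectors c₁, c₂. -/
import Mathlib


open Matrix ComplexOrder

lemma quad_smul_re {n : ℕ} (A : Matrix (Fin n) (Fin n) ℂ) (x y : Fin n → ℂ) (a b : ℝ) :
    (star ((a : ℂ) • x) ⬝ᵥ A.mulVec ((b : ℂ) • y)).re
      = a * b * (star x ⬝ᵥ A.mulVec y).re := by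
  have : star ((a : ℂ) • x) ⬝ᵥ A.mulVec ((b : ℂ) • y)
      = (a : ℂ) * ((b : ℂ) * (star x ⬝ᵥ A.mulVec y)) := by
    simp [star_smul, smul_dotProduct, dotProduct_smul, Matrix.mulVec_smul, smul_smul,
      Complex.star_def, mul_comm, mul_assoc, mul_left_comm]
  rw [this, Complex.re_ofReal_mul, Complex.re_ofReal_mul]
  ring

lemma num_scale {m : ℕ} (A : Matrix (Fin m ⊕ Fin m) (Fin m ⊕ Fin m) ℂ)
    (y₁ y₂ : Fin m → ℂ) (a b : ℝ) (ha : 0 ≤ a) (hb : 0 ≤ b) :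
    (star ((a : ℂ) • y₁) ⬝ᵥ (A.toBlocks₁₂).mulVec ((b : ℂ) • y₂)).re / m +
        Real.sqrt (((star ((a : ℂ) • y₁) ⬝ᵥ (A.toBlocks₁₁).mulVec ((a : ℂ) • y₁)).re / m) *
          ((star ((b : ℂ) • y₂) ⬝ᵥ (A.toBlocks₂₂).mulVec ((b : ℂ) • y₂)).re / m))
      = (a * b) * ((star y₁ ⬝ᵥ (A.toBlocks₁₂).mulVec y₂).re / m +
        Real.sqrt (((star y₁ ⬝ᵥ (A.toBlocks₁₁).mulVec y₁).re / m) *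
          ((star y₂ ⬝ᵥ (A.toBlocks₂₂).mulVec y₂).re / m))) := by
  rw [quad_smul_re, quad_smul_re, quad_smul_re]
  have h1 : a * a * (star y₁ ⬝ᵥ (A.toBlocks₁₁).mulVec y₁).re / ↑m *
      (b * b * (star y₂ ⬝ᵥ (A.toBlocks₂₂).mulVec y₂).re / ↑m)
      = (a * b) ^ 2 * ((star y₁ ⬝ᵥ (A.toBlocks₁₁).mulVec y₁).re / ↑m *
        ((star y₂ ⬝ᵥ (A.toBlocks₂₂).mulVec y₂).re / ↑m)) := by ring
  rw [h1, Real.sqrt_mul (by positivity), Real.sqrt_sq (by positivity)]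
  ring

theorem stmt_16 {m : ℕ} (hm : 0 < m)
    (M : Matrix (Fin m ⊕ Fin m) (Fin m ⊕ Fin m) ℂ) (hM : M.PosDef)
    (p₁ p₂ : Fin m → ℂ) (hp₁ : p₁ ≠ 0) (hp₂ : p₂ ≠ 0)
    (c₁ c₂ : Fin m → ℂ) (τ₁ τ₂ : ℝ) (hτ₁ : 0 < τ₁) (hτ₂ : 0 < τ₂) :
    ∀ P : Matrix (Fin m ⊕ Fin m) (Fin 1 ⊕ Fin 1) ℂ,
      P = Matrix.fromBlocks (Matrix.of fun i _ => p₁ i) 0 0 (Matrix.of fun i _ => p₂ i) →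
    ∀ num : Matrix (Fin m ⊕ Fin m) (Fin m ⊕ Fin m) ℂ → (Fin m → ℂ) → (Fin m → ℂ) → ℝ,
      (num = fun A y₁ y₂ =>
        (star y₁ ⬝ᵥ (A.toBlocks₁₂).mulVec y₂).re / m +
        Real.sqrt (((star y₁ ⬝ᵥ (A.toBlocks₁₁).mulVec y₁).re / m) *
          ((star y₂ ⬝ᵥ (A.toBlocks₂₂).mulVec y₂).re / m))) →
    ∀ LG : (Fin m → ℂ) → (Fin m → ℂ) → ℝ,
      (LG = fun y₁ y₂ =>
        Real.sqrt (num M⁻¹ y₁ y₂) /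
        Real.sqrt (num (M⁻¹ - M⁻¹ * P * (Pᴴ * M⁻¹ * P)⁻¹ * Pᴴ * M⁻¹) y₁ y₂)) →
      LG ((Real.sqrt τ₁ : ℂ) • c₁) ((Real.sqrt τ₂ : ℂ) • c₂) = LG c₁ c₂ := by
  intro P hP num hnum LG hLG
  subst hP hnum hLG
  have ha : (0:ℝ) < Real.sqrt τ₁ := Real.sqrt_pos.mpr hτ₁
  have hb : (0:ℝ) < Real.sqrt τ₂ := Real.sqrt_pos.mpr hτ₂
  have hab : (0:ℝ) < Real.sqrt τ₁ * Real.sqrt τ₂ := mul_pos ha hb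
  simp only
  rw [num_scale _ _ _ _ _ ha.le hb.le, num_scale _ _ _ _ _ ha.le hb.le,
    Real.sqrt_mul hab.le, Real.sqrt_mul hab.le,
    mul_div_mul_left _ _ (by positivity : Real.sqrt (Real.sqrt τ₁ * Real.sqrt τ₂) ≠ 0)]
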